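/- arXiv:0908.0542 — 4 statements merged into one kernel-verified Lean document; each statement's English description precedes it below -/
import Mathlib

section
/- Fix nonnegative half-integers a, b. Define the R-matrix R : V^a ⊗ V^b → V^b ⊗ V^a on basis vectors by R(g^a_u ⊗ g^b_v) = Σ_{n ≥ 0} [n]!(q−q^{−1})^n [a−u choose n][a+u+n choose n] q^{2uv−n(u−v)−n(n+1)/2} g^b_{v−n} ⊗ g^a_{u+n}, the sum over n with |u+n| ≤ a and |v−n| ≤ b, and define R₋ : V^b ⊗ V^a → V^a ⊗ V^b by R₋(g^b_v ⊗ g^a_u) = Σ_{n ≥ 0} [n]!(q^{−1}−q)^n q^{−2vu+n(u−v)+n(n+1)/2} [a−u choose n][a+u+n choose n] g^a_{u+n} ⊗ g^b_{v−n}, with the same range of summation. Then R₋ ∘ R is the identity of V^a ⊗ V^b (equivalently, for every half-integer N ≥ 0 and weights u, v, Σ_{n+m=N, n,m ≥ 0} of the product of the corresponding matrix entries equals δ_{N,0}). -/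
noncomputable section
open scoped Classical

namespace QSpin

/-- The ambient field: rational functions over `ℂ` (which contains `ℚ(i)`),
in a variable `X` which represents the formal fourth root `q^(1/4)`. -/
abbrev K : Type := RatFunc ℂ

/-- `X` represents `q^(1/4)`. -/
def X : K := RatFunc.X

/-- The quantum variable `q = X^4`. -/
def q : K := X ^ 4

/-- `i = √-1`, as a constant of `K`. -/
def ii : K := RatFunc.C Complex.I

/-- `q` raised to a rational power `r` (meaningful whenever `4 * r ∈ ℤ`). -/
def qpow (r : ℚ) : K := X ^ (4 * r).num

/-- Half of an integer, as a rational number: a half-integer is encoded by its double. -/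
def hf (n : ℤ) : ℚ := (n : ℚ) / 2

/-- Integer powers of `i`. -/
def ipow (n : ℤ) : K := ii ^ n

/-- Integer powers of `-1`. -/
def m1pow (n : ℤ) : K := (-1 : K) ^ n

/-- The quantum integer `[n] = (q^n - q^(-n))/(q - q⁻¹)`. -/
def qint (n : ℤ) : K := (q ^ n - q ^ (-n)) / (q - q⁻¹)

/-- The quantum factorial `[n]!`. -/
def qfact (n : ℕ) : K := ∏ j ∈ Finset.range n, qint (j + 1)

/-- The quantum factorial of an integer (zero for negative arguments). -/
def qfactz (n : ℤ) : K := if 0 ≤ n then qfact n.toNat else 0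

/-- The quantum binomial `[n choose k]`, vanishing unless `0 ≤ k ≤ n`. -/
def qbin (n k : ℤ) : K :=
  if 0 ≤ k ∧ k ≤ n then qfactz n / (qfactz k * qfactz (n - k)) else 0

/-- Admissibility of a triple of half-integers (encoded by their doubles):
all nonnegative, total sum an integer (i.e. the sum of the doubles is even), and
the triangular inequalities hold. -/
def Adm (a b c : ℤ) : Prop :=
  0 ≤ a ∧ 0 ≤ b ∧ 0 ≤ c ∧ 2 ∣ (a + b + c) ∧ c ≤ a + b ∧ a ≤ b + c ∧ b ≤ c + a

/-- The quantum Clebsch-Gordan coefficient `C^{a,b,c}_{u,v,t}`; all six half-integer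
parameters are encoded by their doubles. -/
def CG (a b c u v t : ℤ) : K :=
  if u + v = t then
    ipow ((c - a - b) / 2) * m1pow ((b - v) / 2 - (c - t) / 2) *
      qpow ((hf b - hf v) * (hf b + hf v + 1) / 2 - (hf a - hf u) * (hf a + hf u + 1) / 2) *
      (qfactz ((a + b - c) / 2) * qfactz ((b + c - a) / 2) * qfactz ((c + a - b) / 2) /
        qfactz c) *
      ∑ z ∈ Finset.range (((c - t) / 2).toNat + 1),
        m1pow z *
          qpow (((z : ℚ) - (((c - t) / 2 - (z : ℤ) : ℤ) : ℚ)) * (hf c + hf t + 1) / 2) *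
          qbin ((a + u) / 2 + z) ((a + c - b) / 2) *
          qbin ((b + v) / 2 + ((c - t) / 2 - (z : ℤ))) ((b + c - a) / 2) *
          qbin ((c - t) / 2) z
  else 0

/-- The coefficient `W^{a,b,c}_{u,v,t} = C^{a,b,c}_{u,v,-t} · i^{-2t} q^{-t} · [2c]!`. -/
def W (a b c u v t : ℤ) : K := CG a b c u v (-t) * ipow (-t) * qpow (-(hf t)) * qfactz c

/-- The coefficient `P^{a,b,c}_{u,v,t} = C^{a,c,b}_{-u,t,v} · i^{2u} q^{u} / [2a]!`. -/
def Pc (a b c u v t : ℤ) : K := CG a c b (-u) t v * ipow u * qpow (hf u) / qfactz a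

/-- The coefficient `M^{a,b,c}_{u,v,t} = P^{a,b,c}_{u,v,-t} · i^{-2t} q^{-t} / [2c]!`. -/
def M (a b c u v t : ℤ) : K := Pc a b c u v (-t) * ipow (-t) * qpow (-(hf t)) / qfactz c


/-- The `R`-matrix entry: the coefficient of `g^b_{v-n} ⊗ g^a_{u+n}` in
`R(g^a_u ⊗ g^b_v)`, namely `[n]!(q−q^{−1})^n [a−u choose n][a+u+n choose n]
q^{2uv−n(u−v)−n(n+1)/2}`, nonzero only when `|u+n| ≤ a` and `|v−n| ≤ b`.
Half-integers are encoded by their doubles. -/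
def Rent (a b u v : ℤ) (n : ℕ) : K :=
  if |u + 2 * (n : ℤ)| ≤ a ∧ |v - 2 * (n : ℤ)| ≤ b then
    qfact n * (q - q⁻¹) ^ n * qbin ((a - u) / 2) n * qbin ((a + u) / 2 + n) n *
      qpow (2 * hf u * hf v - (n : ℚ) * (hf u - hf v) - (n : ℚ) * ((n : ℚ) + 1) / 2)
  else 0

/-- The inverse `R`-matrix entry: the coefficient of `g^a_{u+n} ⊗ g^b_{v-n}` in
`R₋(g^b_v ⊗ g^a_u)`, namely `[n]!(q^{−1}−q)^n q^{−2vu+n(u−v)+n(n+1)/2}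
[a−u choose n][a+u+n choose n]`, nonzero only when `|u+n| ≤ a` and `|v−n| ≤ b`. -/
def Rinvent (a b u v : ℤ) (n : ℕ) : K :=
  if |u + 2 * (n : ℤ)| ≤ a ∧ |v - 2 * (n : ℤ)| ≤ b then
    qfact n * (q⁻¹ - q) ^ n *
      qpow (-(2 * hf v * hf u) + (n : ℚ) * (hf u - hf v) + (n : ℚ) * ((n : ℚ) + 1) / 2) *
      qbin ((a - u) / 2) n * qbin ((a + u) / 2 + n) n
  else 0

lemma X_ne_zero : (X : K) ≠ 0 := RatFunc.X_ne_zero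
lemma q_ne_zero : (q : K) ≠ 0 := pow_ne_zero _ X_ne_zero

lemma X_pow_ne_one {m : ℕ} (hm : m ≠ 0) : (X : K) ^ m ≠ 1 := by
  intro h
  rw [X, ← RatFunc.algebraMap_X, ← map_pow, ← map_one (algebraMap (Polynomial ℂ) K)] at h
  have := IsFractionRing.injective (Polynomial ℂ) K h
  have := congrArg Polynomial.natDegree this
  simp [Polynomial.natDegree_X_pow] at this
  exact hm this

lemma q_zpow_ne_q_zpow {m n : ℤ} (h : m ≠ n) : (q : K) ^ m ≠ q ^ n := by
  wlog hlt : n < m generalizing m n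
  · intro he; exact this h.symm (by omega) he.symm
  intro he
  have hx : (X : K) ^ (4 * m) = X ^ (4 * n) := by
    rw [q] at he; rw [← zpow_natCast, ← zpow_mul, ← zpow_mul] at he
    simpa [mul_comm] using he
  have h2 : (X : K) ^ (4 * m - 4 * n) = 1 := by
    rw [zpow_sub₀ X_ne_zero, hx, div_self (zpow_ne_zero _ X_ne_zero)]
  have h3 : (4 * m - 4 * n) = ((4 * m - 4 * n).toNat : ℤ) := by omega
  rw [h3, zpow_natCast] at h2
  exact X_pow_ne_one (by omega) h2

lemma qq_ne : (q : K) - q⁻¹ ≠ 0 := by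
  have := q_zpow_ne_q_zpow (show (1 : ℤ) ≠ -1 by omega)
  simpa [zpow_one, sub_ne_zero] using this

lemma qint_ne_zero {n : ℤ} (hn : 0 < n) : qint n ≠ 0 := by
  have h1 : (q : K) ^ n - q ^ (-n) ≠ 0 := sub_ne_zero.2 (q_zpow_ne_q_zpow (by omega))
  exact div_ne_zero h1 qq_ne

lemma qfact_ne_zero (n : ℕ) : qfact n ≠ 0 := by
  rw [qfact]
  exact Finset.prod_ne_zero_iff.2 fun j _ => qint_ne_zero (by exact_mod_cast Nat.succ_pos j)

lemma qfactz_ne_zero {n : ℤ} (hn : 0 ≤ n) : qfactz n ≠ 0 := by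
  rw [qfactz, if_pos hn]; exact qfact_ne_zero _

lemma qfactz_nonneg_eq {n : ℤ} (hn : 0 ≤ n) : qfactz n = qfact n.toNat := if_pos hn

lemma qfact_succ (n : ℕ) : qfact (n + 1) = qfact n * qint (n + 1) := by
  rw [qfact, Finset.prod_range_succ, qfact]

lemma qfactz_succ {n : ℤ} (hn : 0 ≤ n) : qfactz (n + 1) = qfactz n * qint (n + 1) := by
  rw [qfactz_nonneg_eq (by omega), qfactz_nonneg_eq hn]
  have : (n + 1).toNat = n.toNat + 1 := by omega
  rw [this, qfact_succ]
  congr 2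
  omega

-- new material
lemma qfactz_zero : qfactz 0 = 1 := by simp [qfactz, qfact]

lemma qbin_pos {n k : ℤ} (h0 : 0 ≤ k) (h1 : k ≤ n) :
    qbin n k = qfactz n / (qfactz k * qfactz (n - k)) := if_pos ⟨h0, h1⟩

lemma qbin_zero {n : ℤ} (hn : 0 ≤ n) : qbin n 0 = 1 := by
  rw [qbin_pos le_rfl hn, qfactz_zero, one_mul, sub_zero,
    div_self (qfactz_ne_zero hn)]

lemma qbin_self {n : ℤ} (hn : 0 ≤ n) : qbin n n = 1 := by
  rw [qbin_pos hn le_rfl, sub_self, qfactz_zero, mul_one,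
    div_self (qfactz_ne_zero hn)]

lemma qbin_neg {n k : ℤ} (h : k < 0) : qbin n k = 0 := by
  rw [qbin, if_neg]; omega

lemma qbin_gt {n k : ℤ} (h : n < k) : qbin n k = 0 := by
  rw [qbin, if_neg]; omega

lemma chainL (A : ℤ) (N n : ℕ) (hn : n ≤ N) (hA : (N : ℤ) ≤ A) :
    qfact n * qbin A n * (qfact (N - n) * qbin (A - n) ((N : ℤ) - n)) =
      qfactz A / qfactz (A - N) := by
  have h1 : qbin A n = qfactz A / (qfactz n * qfactz (A - n)) :=
    qbin_pos (by omega) (by omega)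
  have h2 : qbin (A - n) ((N : ℤ) - n) =
      qfactz (A - n) / (qfactz ((N : ℤ) - n) * qfactz (A - N)) := by
    rw [qbin_pos (by omega) (by omega), show A - ↑n - ((N : ℤ) - ↑n) = A - ↑N from by ring]
  have hf1 : qfact n = qfactz n := by rw [qfactz_nonneg_eq (by omega)]; simp
  have hf2 : qfact (N - n) = qfactz ((N : ℤ) - n) := by
    rw [qfactz_nonneg_eq (by omega)]
    congr 1
    omega
  rw [h1, h2, hf1, hf2]
  have z1 : qfactz (n : ℤ) ≠ 0 := qfactz_ne_zero (by omega)
  have z2 : qfactz (A - n) ≠ 0 := qfactz_ne_zero (by omega)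
  have z3 : qfactz ((N : ℤ) - n) ≠ 0 := qfactz_ne_zero (by omega)
  have z4 : qfactz (A - N) ≠ 0 := qfactz_ne_zero (by omega)
  field_simp

lemma binL (C : ℤ) (hC : 0 ≤ C) (N n : ℕ) (hn : n ≤ N) :
    qbin (C + n) n * qbin (C + N) ((N : ℤ) - n) = qbin (C + N) N * qbin N n := by
  have h1 : qbin (C + n) n = qfactz (C + n) / (qfactz n * qfactz C) := by
    rw [qbin_pos (by omega) (by omega), show C + ↑n - ↑n = C from by ring]
  have h2 : qbin (C + N) ((N : ℤ) - n) =
      qfactz (C + N) / (qfactz ((N : ℤ) - n) * qfactz (C + n)) := by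
    rw [qbin_pos (by omega) (by omega),
      show C + ↑N - ((N : ℤ) - ↑n) = C + ↑n from by ring]
  have h3 : qbin (C + N) N = qfactz (C + N) / (qfactz N * qfactz C) := by
    rw [qbin_pos (by omega) (by omega), show C + ↑N - ↑N = C from by ring]
  have h4 : qbin (N : ℤ) n = qfactz N / (qfactz n * qfactz ((N : ℤ) - n)) :=
    qbin_pos (by omega) (by omega)
  rw [h1, h2, h3, h4]
  have z1 : qfactz (n : ℤ) ≠ 0 := qfactz_ne_zero (by omega)
  have z2 : qfactz (C : ℤ) ≠ 0 := qfactz_ne_zero hC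
  have z3 : qfactz ((N : ℤ) - n) ≠ 0 := qfactz_ne_zero (by omega)
  have z4 : qfactz (C + n) ≠ 0 := qfactz_ne_zero (by omega)
  have z5 : qfactz (N : ℤ) ≠ 0 := qfactz_ne_zero (by omega)
  field_simp

lemma qint_add (s t : ℤ) : qint (s + t) = q ^ (-t) * qint s + q ^ s * qint t := by
  rw [qint, qint, qint, ← mul_div_assoc, ← mul_div_assoc, ← add_div]
  congr 1
  have hc : (q : K) ^ s ≠ 0 := zpow_ne_zero s q_ne_zero
  have hd : (q : K) ^ t ≠ 0 := zpow_ne_zero t q_ne_zero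
  rw [neg_add, zpow_add₀ q_ne_zero, zpow_add₀ q_ne_zero, zpow_neg, zpow_neg]
  field_simp
  ring

lemma pascal (N n : ℕ) (hn : n ≤ N + 1) :
    qbin ((N : ℤ) + 1) n =
      q ^ (-(n : ℤ)) * qbin N n + q ^ ((N : ℤ) + 1 - n) * qbin N ((n : ℤ) - 1) := by
  rcases Nat.eq_zero_or_pos n with h0 | h0
  · subst h0
    simp only [Nat.cast_zero, neg_zero, zpow_zero, one_mul, sub_zero]
    rw [qbin_zero (by omega), qbin_zero (by omega), qbin_neg (by omega)]
    ring
  rcases eq_or_lt_of_le hn with hN | hN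
  · -- n = N + 1
    have hc : (n : ℤ) = (N : ℤ) + 1 := by omega
    rw [hc, qbin_self (by omega), qbin_gt (by omega),
      show (N : ℤ) + 1 - ((N : ℤ) + 1) = 0 from by ring, zpow_zero,
      show (N : ℤ) + 1 - 1 = (N : ℤ) from by ring, qbin_self (by omega)]
    ring
  · -- 1 ≤ n ≤ N
    have hnN : n ≤ N := by omega
    rw [qbin_pos (by omega) (by omega), qbin_pos (by omega) (by omega),
      qbin_pos (by omega) (by omega)]
    have e1 : qfactz ((N : ℤ) + 1) = qfactz N * qint ((N : ℤ) + 1) := qfactz_succ (by omega)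
    have e2 : qfactz ((N : ℤ) + 1 - n) = qfactz ((N : ℤ) - n) * qint ((N : ℤ) + 1 - n) := by
      rw [show (N : ℤ) + 1 - n = ((N : ℤ) - n) + 1 from by ring,
        qfactz_succ (show (0 : ℤ) ≤ (N : ℤ) - n from by omega),
        show (N : ℤ) - n + 1 = (N : ℤ) + 1 - n from by ring]
    have e3 : qfactz (n : ℤ) = qfactz ((n : ℤ) - 1) * qint n := by
      rw [show (n : ℤ) = ((n : ℤ) - 1) + 1 from by ring,
        qfactz_succ (show (0 : ℤ) ≤ (n : ℤ) - 1 from by omega)]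
      rw [show (n : ℤ) - 1 + 1 = (n : ℤ) from by ring]
    have e4 : qint ((N : ℤ) + 1) =
        q ^ (-(n : ℤ)) * qint ((N : ℤ) + 1 - n) + q ^ ((N : ℤ) + 1 - n) * qint n := by
      have := qint_add ((N : ℤ) + 1 - n) n
      rw [show (N : ℤ) + 1 - n + n = (N : ℤ) + 1 from by ring] at this
      exact this
    have e5 : (N : ℤ) - (↑n - 1) = (N : ℤ) + 1 - n := by ring
    rw [e5, e1, e2, e3, e4]
    have z1 : qfactz ((n : ℤ) - 1) ≠ 0 := qfactz_ne_zero (by omega)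
    have z2 : qint (n : ℤ) ≠ 0 := qint_ne_zero (by omega)
    have z3 : qfactz ((N : ℤ) - n) ≠ 0 := qfactz_ne_zero (by omega)
    have z4 : qint ((N : ℤ) + 1 - n) ≠ 0 := qint_ne_zero (by omega)
    have z5 : qfactz (N : ℤ) ≠ 0 := qfactz_ne_zero (by omega)
    rw [← mul_div_assoc, ← mul_div_assoc]
    rw [div_add_div _ _ (mul_ne_zero (mul_ne_zero z1 z2) z3)
      (mul_ne_zero z1 (mul_ne_zero z3 z4)),
      div_eq_div_iff (mul_ne_zero (mul_ne_zero z1 z2) (mul_ne_zero z3 z4))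
      (mul_ne_zero (mul_ne_zero (mul_ne_zero z1 z2) z3) (mul_ne_zero z1 (mul_ne_zero z3 z4)))]
    ring

def Tsum (N : ℕ) : K :=
  ∑ n ∈ Finset.range (N + 1), (-1 : K) ^ n * q ^ ((n : ℤ) * ((N : ℤ) - 1)) * qbin N n

lemma Tsum_eq_zero {N : ℕ} (hN : 1 ≤ N) : Tsum N = 0 := by
  induction N, hN using Nat.le_induction with
  | base =>
    rw [Tsum]
    simp [Finset.sum_range_succ, qbin_zero, qbin_self]
  | succ N hN ih =>
    rw [Tsum]
    have step : ∀ n ∈ Finset.range (N + 1 + 1),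
        (-1 : K) ^ n * q ^ ((n : ℤ) * (((N + 1 : ℕ) : ℤ) - 1)) * qbin ((N + 1 : ℕ) : ℤ) n =
          (-1 : K) ^ n * q ^ ((n : ℤ) * ((N : ℤ) - 1)) * qbin N n +
            q ^ (2 * (N : ℤ)) *
              ((-1 : K) ^ n * q ^ (((n : ℤ) - 1) * ((N : ℤ) - 1)) * qbin N ((n : ℤ) - 1)) := by
      intro n hn
      rw [Finset.mem_range] at hn
      have hc : ((N + 1 : ℕ) : ℤ) = (N : ℤ) + 1 := by push_cast; ring
      rw [hc, pascal N n (by omega), mul_add]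
      have hq1 : q ^ ((n : ℤ) * ((N : ℤ) + 1 - 1)) * q ^ (-(n : ℤ)) =
          q ^ ((n : ℤ) * ((N : ℤ) - 1)) := by
        rw [← zpow_add₀ q_ne_zero]; congr 1; ring
      have hq2 : q ^ ((n : ℤ) * ((N : ℤ) + 1 - 1)) * q ^ ((N : ℤ) + 1 - n) =
          q ^ (2 * (N : ℤ)) * q ^ (((n : ℤ) - 1) * ((N : ℤ) - 1)) := by
        rw [← zpow_add₀ q_ne_zero, ← zpow_add₀ q_ne_zero]; congr 1; ring
      congr 1
      · linear_combination ((-1 : K) ^ n * qbin (N : ℤ) n) * hq1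
      · linear_combination ((-1 : K) ^ n * qbin (N : ℤ) ((n : ℤ) - 1)) * hq2
    rw [Finset.sum_congr rfl step, Finset.sum_add_distrib]
    have p1 : (∑ n ∈ Finset.range (N + 1 + 1),
        (-1 : K) ^ n * q ^ ((n : ℤ) * ((N : ℤ) - 1)) * qbin N n) = Tsum N := by
      rw [Finset.sum_range_succ, Tsum]
      rw [qbin_gt (by exact_mod_cast Nat.lt_succ_self N)]
      simp
    have p2 : (∑ n ∈ Finset.range (N + 1 + 1),
        q ^ (2 * (N : ℤ)) *
          ((-1 : K) ^ n * q ^ (((n : ℤ) - 1) * ((N : ℤ) - 1)) * qbin N ((n : ℤ) - 1))) =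
        q ^ (2 * (N : ℤ)) * -Tsum N := by
      rw [← Finset.mul_sum]
      congr 1
      rw [Finset.sum_range_succ']
      rw [show ((0 : ℕ) : ℤ) - 1 = -1 from by norm_num, qbin_neg (by omega)]
      simp only [mul_zero, add_zero]
      rw [Tsum, ← Finset.sum_neg_distrib]
      apply Finset.sum_congr rfl
      intro n hn
      push_cast
      rw [show (n : ℤ) + 1 - 1 = (n : ℤ) from by ring, pow_succ]
      ring
    rw [p1, p2, ih]
    ring

lemma qpow_eq {r : ℚ} {k : ℤ} (h : r * 4 = (k : ℚ)) : qpow r = X ^ k := by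
  rw [qpow, show 4 * r = (k : ℚ) from by linarith, Rat.num_intCast]

lemma q_zpow (k : ℤ) : (q : K) ^ k = X ^ (4 * k) := by
  rw [q, ← zpow_natCast X 4, ← zpow_mul]
  norm_num

lemma term_eq (a b u v : ℤ) (N n : ℕ) (hn : n ≤ N)
    (hu : |u| ≤ a) (hv : |v| ≤ b) (hua : 2 ∣ (a - u)) (hvb : 2 ∣ (b - v))
    (hG1 : |u + 2 * (N : ℤ)| ≤ a) (hG2 : |v - 2 * (N : ℤ)| ≤ b) :
    Rent a b u v n * Rinvent a b (u + 2 * (n : ℤ)) (v - 2 * (n : ℤ)) (N - n) =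
      (qfactz ((a - u) / 2) / qfactz ((a - u) / 2 - N) * (q - q⁻¹) ^ N * (-1 : K) ^ N *
          X ^ (2 * (N : ℤ) * (u - v) + 2 * (N : ℤ) * ((N : ℤ) + 1)) *
          qbin ((a + u) / 2 + N) N) *
        ((-1 : K) ^ n * q ^ ((n : ℤ) * ((N : ℤ) - 1)) * qbin N n) := by
  rw [abs_le] at hu hv hG1 hG2
  have hNA : (N : ℤ) ≤ (a - u) / 2 := by omega
  have h0C : 0 ≤ (a + u) / 2 := by omega
  have c1 : |u + 2 * (n : ℤ)| ≤ a ∧ |v - 2 * (n : ℤ)| ≤ b :=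
    ⟨abs_le.2 ⟨by omega, by omega⟩, abs_le.2 ⟨by omega, by omega⟩⟩
  have c2 : |u + 2 * (n : ℤ) + 2 * ((N - n : ℕ) : ℤ)| ≤ a ∧
      |v - 2 * (n : ℤ) - 2 * ((N - n : ℕ) : ℤ)| ≤ b :=
    ⟨abs_le.2 ⟨by omega, by omega⟩, abs_le.2 ⟨by omega, by omega⟩⟩
  rw [Rent, Rinvent, if_pos c1, if_pos c2]
  have he1 : qpow (2 * hf u * hf v - (n : ℚ) * (hf u - hf v) - (n : ℚ) * ((n : ℚ) + 1) / 2) =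
      X ^ (2 * u * v - 2 * (n : ℤ) * (u - v) - 2 * (n : ℤ) * ((n : ℤ) + 1)) :=
    qpow_eq (by push_cast [hf]; ring)
  have he2 : qpow (-(2 * hf (v - 2 * (n : ℤ)) * hf (u + 2 * (n : ℤ))) +
        ((N - n : ℕ) : ℚ) * (hf (u + 2 * (n : ℤ)) - hf (v - 2 * (n : ℤ))) +
        ((N - n : ℕ) : ℚ) * (((N - n : ℕ) : ℚ) + 1) / 2) =
      X ^ (-(2 * (v - 2 * (n : ℤ)) * (u + 2 * (n : ℤ))) +
        2 * ((N : ℤ) - n) * ((u + 2 * (n : ℤ)) - (v - 2 * (n : ℤ))) +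
        2 * ((N : ℤ) - n) * (((N : ℤ) - n) + 1)) :=
    qpow_eq (by push_cast [hf, Nat.cast_sub hn]; ring)
  have hb1 : (a - (u + 2 * (n : ℤ))) / 2 = (a - u) / 2 - n := by omega
  have hb2 : (a + (u + 2 * (n : ℤ))) / 2 + ((N - n : ℕ) : ℤ) = (a + u) / 2 + N := by omega
  have hmc : ((N - n : ℕ) : ℤ) = (N : ℤ) - n := by omega
  rw [he1, he2, hb1, hb2, hmc]
  have hs : ((-1 : K)) ^ (N - n) = (-1) ^ N * (-1) ^ n := by
    rw [← pow_add, show N + n = (N - n) + 2 * n from by omega, pow_add, pow_mul]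
    norm_num
  have h3 : (q - q⁻¹) ^ n * (q⁻¹ - q) ^ (N - n) = (-1 : K) ^ N * (-1) ^ n * (q - q⁻¹) ^ N := by
    rw [show (q⁻¹ - q : K) = -(q - q⁻¹) from by ring, neg_pow, hs,
      show (q - q⁻¹ : K) ^ N = (q - q⁻¹) ^ n * (q - q⁻¹) ^ (N - n) from by
        rw [← pow_add]; congr 1; omega]
    ring
  have h4 : X ^ (2 * u * v - 2 * (n : ℤ) * (u - v) - 2 * (n : ℤ) * ((n : ℤ) + 1)) *
      X ^ (-(2 * (v - 2 * (n : ℤ)) * (u + 2 * (n : ℤ))) +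
        2 * ((N : ℤ) - n) * ((u + 2 * (n : ℤ)) - (v - 2 * (n : ℤ))) +
        2 * ((N : ℤ) - n) * (((N : ℤ) - n) + 1)) =
      X ^ (2 * (N : ℤ) * (u - v) + 2 * (N : ℤ) * ((N : ℤ) + 1)) *
        q ^ ((n : ℤ) * ((N : ℤ) - 1)) := by
    rw [q_zpow, ← zpow_add₀ X_ne_zero, ← zpow_add₀ X_ne_zero]
    congr 1
    ring
  have hch := chainL ((a - u) / 2) N n hn hNA
  have hbl := binL ((a + u) / 2) h0C N n hn
  calc qfact n * (q - q⁻¹) ^ n * qbin ((a - u) / 2) n * qbin ((a + u) / 2 + n) n *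
        X ^ (2 * u * v - 2 * (n : ℤ) * (u - v) - 2 * (n : ℤ) * ((n : ℤ) + 1)) *
        (qfact (N - n) * (q⁻¹ - q) ^ (N - n) *
          X ^ (-(2 * (v - 2 * (n : ℤ)) * (u + 2 * (n : ℤ))) +
            2 * ((N : ℤ) - n) * ((u + 2 * (n : ℤ)) - (v - 2 * (n : ℤ))) +
            2 * ((N : ℤ) - n) * (((N : ℤ) - n) + 1)) *
          qbin ((a - u) / 2 - n) ((N : ℤ) - n) * qbin ((a + u) / 2 + N) ((N : ℤ) - n))
      = (qfact n * qbin ((a - u) / 2) n *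
          (qfact (N - n) * qbin ((a - u) / 2 - n) ((N : ℤ) - n))) *
        (qbin ((a + u) / 2 + n) n * qbin ((a + u) / 2 + N) ((N : ℤ) - n)) *
        ((q - q⁻¹) ^ n * (q⁻¹ - q) ^ (N - n)) *
        (X ^ (2 * u * v - 2 * (n : ℤ) * (u - v) - 2 * (n : ℤ) * ((n : ℤ) + 1)) *
          X ^ (-(2 * (v - 2 * (n : ℤ)) * (u + 2 * (n : ℤ))) +
            2 * ((N : ℤ) - n) * ((u + 2 * (n : ℤ)) - (v - 2 * (n : ℤ))) +
            2 * ((N : ℤ) - n) * (((N : ℤ) - n) + 1))) := by ring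
    _ = (qfactz ((a - u) / 2) / qfactz ((a - u) / 2 - N)) *
        (qbin ((a + u) / 2 + N) N * qbin N n) *
        ((-1 : K) ^ N * (-1) ^ n * (q - q⁻¹) ^ N) *
        (X ^ (2 * (N : ℤ) * (u - v) + 2 * (N : ℤ) * ((N : ℤ) + 1)) *
          q ^ ((n : ℤ) * ((N : ℤ) - 1))) := by rw [hch, hbl, h3, h4]
    _ = _ := by ring

/-- `R₋ ∘ R` is the identity of `V^a ⊗ V^b`: for every `N ≥ 0` and
weights `u, v`, the sum over `n + m = N` of the products of the corresponding matrix
entries equals `δ_{N,0}`. -/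
theorem Rmatrix_inverse (a b u v : ℤ) (ha : 0 ≤ a) (hb : 0 ≤ b)
    (hu : |u| ≤ a) (hv : |v| ≤ b) (hua : 2 ∣ (a - u)) (hvb : 2 ∣ (b - v)) (N : ℕ) :
    (∑ n ∈ Finset.range (N + 1),
        Rent a b u v n * Rinvent a b (u + 2 * (n : ℤ)) (v - 2 * (n : ℤ)) (N - n))
      = if N = 0 then 1 else 0 := by
  rcases Nat.eq_zero_or_pos N with h0 | hpos
  · subst h0
    rw [Finset.range_one, Finset.sum_singleton, if_pos rfl]
    rw [term_eq a b u v 0 0 le_rfl hu hv hua hvb (by simpa using hu) (by simpa using hv)]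
    have hu' := abs_le.1 hu
    have hv' := abs_le.1 hv
    norm_num
    rw [qbin_zero (show (0 : ℤ) ≤ (a + u) / 2 from by omega),
      qbin_zero (le_refl (0 : ℤ)),
      div_self (qfactz_ne_zero (show (0 : ℤ) ≤ (a - u) / 2 from by omega))]
    norm_num
  · rw [if_neg (by omega)]
    by_cases hG : |u + 2 * (N : ℤ)| ≤ a ∧ |v - 2 * (N : ℤ)| ≤ b
    · rw [Finset.sum_congr rfl (fun n hn =>
        term_eq a b u v N n (Finset.mem_range_succ_iff.1 hn) hu hv hua hvb hG.1 hG.2)]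
      rw [← Finset.mul_sum, ← Tsum, Tsum_eq_zero hpos, mul_zero]
    · apply Finset.sum_eq_zero
      intro n hn
      rw [Finset.mem_range] at hn
      have hz : Rinvent a b (u + 2 * (n : ℤ)) (v - 2 * (n : ℤ)) (N - n) = 0 := by
        rw [Rinvent, if_neg]
        intro hc
        obtain ⟨hc1, hc2⟩ := hc
        rw [abs_le] at hc1 hc2
        exact hG ⟨abs_le.2 ⟨by omega, by omega⟩, abs_le.2 ⟨by omega, by omega⟩⟩
      rw [hz, mul_zero]


end QSpin
end
end

section
/- Let (a,b,c) be an admissible triple of half-integers (so in particular |c−b| ≤ a). Then q^{2(c−b)b} · C^{a,b,c}_{c−b,b,c} = i^{2(c−a−b)} q^{c²+c−(a²+a)−(b²+b)} · C^{b,a,c}_{b,c−b,c}. (This is the highest-weight coefficient identity expressing that a positive crossing composed with a trivalent vertex equals the vertex with the legs exchanged, corrected by half-twist factors H_x = i^{2x}q^{x²+x}.) -/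
noncomputable section
open scoped Classical

namespace QSpin

lemma qpow_eq_X_zpow (n : ℤ) {r : ℚ} (h : 4 * r = (n : ℚ)) : qpow r = X ^ n := by
  rw [qpow, h]
  norm_num

lemma ii_sq : ii ^ 2 = -1 := by
  rw [ii, ← map_pow, Complex.I_sq, map_neg, map_one]

/-- The highest-weight coefficient identity: for an admissible triple
`(a,b,c)` of half-integers (encoded by doubles),
`q^{2(c−b)b} · C^{a,b,c}_{c−b,b,c} = i^{2(c−a−b)} q^{c²+c−(a²+a)−(b²+b)} · C^{b,a,c}_{b,c−b,c}`. -/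
theorem halftwist_vertex (a b c : ℤ) (h : Adm a b c) :
    qpow (2 * (hf c - hf b) * hf b) * CG a b c (c - b) b c
      = ipow (c - a - b) *
          qpow (hf c ^ 2 + hf c - (hf a ^ 2 + hf a) - (hf b ^ 2 + hf b)) *
          CG b a c b (c - b) c := by
  obtain ⟨ha, hb, hc, ⟨d, hd⟩, h1, h2, h3⟩ := h
  have hdQ : (a : ℚ) + b + c = 2 * d := by exact_mod_cast hd
  rw [CG, CG, if_pos (by ring : c - b + b = c), if_pos (by ring : b + (c - b) = c)]
  rw [show (c - c) / 2 = 0 from by omega]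
  simp only [Finset.sum_range_one, Nat.cast_zero, sub_zero, add_zero, Int.toNat_zero,
    zero_add, Int.cast_zero]
  rw [show (c - a - b) / 2 = c - d from by omega, show (c - b - a) / 2 = c - d from by omega,
    show (b - b) / 2 = 0 from by omega, show (a - (c - b)) / 2 = d - c from by omega,
    show (a + b - c) / 2 = d - c from by omega, show (b + a - c) / 2 = d - c from by omega,
    show (b + c - a) / 2 = d - a from by omega, show (c + b - a) / 2 = d - a from by omega,
    show (c + a - b) / 2 = d - b from by omega, show (a + c - b) / 2 = d - b from by omega,
    show (a + (c - b)) / 2 = d - b from by omega, show (b + b) / 2 = b from by omega]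
  rw [qpow_eq_X_zpow (r := 2 * (hf c - hf b) * hf b) (2 * (c - b) * b)
      (by simp only [hf]; push_cast; ring)]
  rw [qpow_eq_X_zpow (r := (hf b - hf b) * (hf b + hf b + 1) / 2 -
        (hf a - hf (c - b)) * (hf a + hf (c - b) + 1) / 2) (-((d - c) * (a + c - b + 2)))
      (by simp only [hf]; push_cast; linear_combination (-((a : ℚ) + c - b + 2) / 2) * hdQ)]
  rw [qpow_eq_X_zpow (r := hf c ^ 2 + hf c - (hf a ^ 2 + hf a) - (hf b ^ 2 + hf b))
      (c ^ 2 + 2 * c - a ^ 2 - 2 * a - b ^ 2 - 2 * b)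
      (by simp only [hf]; push_cast; ring)]
  rw [qpow_eq_X_zpow (r := (hf a - hf (c - b)) * (hf a + hf (c - b) + 1) / 2 -
        (hf b - hf b) * (hf b + hf b + 1) / 2) ((d - c) * (a + c - b + 2))
      (by simp only [hf]; push_cast; linear_combination (((a : ℚ) + c - b + 2) / 2) * hdQ)]
  rw [qpow_eq_X_zpow (r := 0 * (hf c + hf c + 1) / 2) 0 (by push_cast; ring), zpow_zero]
  rw [show m1pow 0 = 1 from by rw [m1pow, zpow_zero]]
  have hX : (X : K) ≠ 0 := RatFunc.X_ne_zero
  have hm1 : (-1 : K) ≠ 0 := by norm_num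
  have hip : ipow (c - a - b) * m1pow (d - c) = 1 := by
    rw [ipow, m1pow, show c - a - b = 2 * (c - d) from by omega, zpow_mul,
      show (ii ^ (2 : ℤ)) = ii ^ 2 from by rw [show (2:ℤ) = ((2:ℕ):ℤ) from rfl, zpow_natCast], ii_sq, ← zpow_add₀ hm1]
    norm_num
  have hXX : (X : K) ^ (2 * (c - b) * b) * X ^ (-((d - c) * (a + c - b + 2)))
      = X ^ (c ^ 2 + 2 * c - a ^ 2 - 2 * a - b ^ 2 - 2 * b) * X ^ ((d - c) * (a + c - b + 2)) := by
    rw [← zpow_add₀ hX, ← zpow_add₀ hX]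
    congr 1
    linear_combination (a + c - b + 2) * hd
  linear_combination
    (ipow (c - d) *
      (qfactz (d - c) * qfactz (d - a) * qfactz (d - b) / qfactz c) *
      (qbin (d - b) (d - b) * qbin b (d - a) * qbin 0 0)) * hXX -
    (ipow (c - d) *
      (qfactz (d - c) * qfactz (d - a) * qfactz (d - b) / qfactz c) *
      (qbin (d - b) (d - b) * qbin b (d - a) * qbin 0 0) *
      X ^ (c ^ 2 + 2 * c - a ^ 2 - 2 * a - b ^ 2 - 2 * b) *
      X ^ ((d - c) * (a + c - b + 2))) * hip


end QSpin
end
end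

section
/- If m and n are coprime positive integers and P ∈ ℤ[q, q^{−1}] is divisible in ℤ[q, q^{−1}] by both the quantum integers [m] and [n], then P is divisible by the product [m]·[n] in ℤ[q, q^{−1}]. -/
noncomputable section

namespace QSpin

/-- The quantum integer `[n] = q^{n−1} + q^{n−3} + ⋯ + q^{1−n}` as a Laurent polynomial
with integer coefficients (`LaurentPolynomial.T k` is the monomial `q^k`). -/
def qintL (n : ℕ) : LaurentPolynomial ℤ :=
  ∑ j ∈ Finset.range n, LaurentPolynomial.T ((n : ℤ) - 1 - 2 * (j : ℤ))

open LaurentPolynomial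

lemma qintL_one : qintL 1 = 1 := by
  simp [qintL]

lemma qintL_add (a b : ℕ) :
    qintL (a + b) = T (b : ℤ) * qintL a + T (-(a : ℤ)) * qintL b := by
  rw [qintL, Finset.sum_range_add, qintL, qintL, Finset.mul_sum, Finset.mul_sum]
  congr 1
  · refine Finset.sum_congr rfl fun j _ => ?_
    rw [← T_add]
    congr 1
    push_cast
    ring
  · refine Finset.sum_congr rfl fun j _ => ?_
    rw [← T_add]
    congr 1
    push_cast
    ring

lemma isCoprime_qintL : ∀ N m n : ℕ, m + n ≤ N → 0 < m → 0 < n → Nat.Coprime m n →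
    IsCoprime (qintL m) (qintL n) := by
  intro N
  induction N with
  | zero => intro m n hmn hm hn _; omega
  | succ N ih =>
    intro m n hmn hm hn h
    rcases lt_trichotomy m n with hlt | heq | hgt
    · have hd : n = m + (n - m) := by omega
      have hcop : Nat.Coprime m (n - m) := by
        simpa using (Nat.coprime_sub_self_right (le_of_lt hlt)).mpr h
      have hc := ih m (n - m) (by omega) hm (by omega) hcop
      rw [hd, qintL_add]
      have := ((isCoprime_mul_unit_left_right (isUnit_T (-(m:ℤ))) (qintL m)
        (qintL (n - m))).mpr hc)
      have h2 := this.add_mul_right_right (T ((n - m : ℕ) : ℤ))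
      -- h2 : IsCoprime (qintL m) (T (-(m:ℤ)) * qintL (n-m) + qintL m * T _)
      convert h2 using 1
      exacts [rfl, by ring]
    · subst heq
      have : m = 1 := by simpa [Nat.Coprime, Nat.gcd_self] using h
      subst this
      rw [qintL_one]; exact isCoprime_one_left
    · have hd : m = n + (m - n) := by omega
      have hcop : Nat.Coprime n (m - n) := by
        simpa using (Nat.coprime_sub_self_right (le_of_lt hgt)).mpr h.symm
      have hc := ih n (m - n) (by omega) hn (by omega) hcop
      rw [hd, qintL_add]
      have := ((isCoprime_mul_unit_left_right (isUnit_T (-(n:ℤ))) (qintL n)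
        (qintL (m - n))).mpr hc)
      have h2 := (this.add_mul_right_right (T ((m - n : ℕ) : ℤ))).symm
      convert h2 using 1
      exacts [rfl, by ring]

/-- If `m` and `n` are coprime positive integers and
`P ∈ ℤ[q, q⁻¹]` is divisible by both `[m]` and `[n]`, then `P` is divisible by
`[m]·[n]` in `ℤ[q, q⁻¹]`. -/
theorem coprime_qint_dvd (m n : ℕ) (hm : 0 < m) (hn : 0 < n) (h : Nat.Coprime m n)
    (P : LaurentPolynomial ℤ) (h1 : qintL m ∣ P) (h2 : qintL n ∣ P) :
    qintL m * qintL n ∣ P :=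
  (isCoprime_qintL (m + n) m n le_rfl hm hn h).mul_dvd h1 h2

end QSpin
end
end

section
/- Non-integrality of a shadow-state weight: the rational function [3]² · ([5] − 1)⁶ / [4]! (where [4]! = [1][2][3][4]) is not a Laurent polynomial with integer coefficients; equivalently, [4]! does not divide [3]²([5]−1)⁶ in ℤ[q, q^{−1}]. -/
noncomputable section

namespace QSpin

/-- The quantum factorial `[n]!` as a Laurent polynomial. -/
def qfactL (n : ℕ) : LaurentPolynomial ℤ := ∏ j ∈ Finset.range n, qintL (j + 1)

/-- `2` as a unit of `ZMod 17`; note `2⁴ = 16 = -1 (mod 17)`. -/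
def u17 : (ZMod 17)ˣ := ⟨2, 9, by decide, by decide⟩

/-- Evaluation map `ℤ[q,q⁻¹] → ZMod 17` sending `q ↦ 2`. -/
def φ17 : LaurentPolynomial ℤ →ₐ[ℤ] ZMod 17 :=
  AddMonoidAlgebra.lift ℤ (ZMod 17) ℤ
    ((Units.coeHom (ZMod 17)).comp (zpowersHom (ZMod 17)ˣ u17))

lemma φ17_T (k : ℤ) :
    φ17 (LaurentPolynomial.T k) = ((u17 ^ k : (ZMod 17)ˣ) : ZMod 17) := by
  rw [LaurentPolynomial.T, φ17, AddMonoidAlgebra.lift_single]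
  simp

/-- Non-integrality of a shadow-state weight: `[4]!` does not divide
`[3]²([5]−1)⁶` in `ℤ[q, q⁻¹]`; equivalently, the rational function
`[3]²([5]−1)⁶/[4]!` is not a Laurent polynomial with integer coefficients. -/
theorem shadow_weight_not_integral :
    ¬ (qfactL 4 ∣ (qintL 3) ^ 2 * (qintL 5 - 1) ^ 6) := by
  intro h
  have h2 := map_dvd φ17.toRingHom h
  have e3 : φ17 (qintL 3) = 1 := by
    simp only [qintL, Finset.sum_range_succ, Finset.sum_range_zero, map_add, map_zero, φ17_T,
      zero_add]
    decide
  have e4 : φ17 (qfactL 4) = 0 := by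
    simp only [qfactL, qintL, Finset.prod_range_succ, Finset.prod_range_zero,
      Finset.sum_range_succ, Finset.sum_range_zero, map_mul, map_one, map_add, map_zero,
      φ17_T, zero_add, one_mul]
    decide
  have e5 : φ17 (qintL 5) = -1 := by
    simp only [qintL, Finset.sum_range_succ, Finset.sum_range_zero, map_add, map_zero, φ17_T,
      zero_add]
    decide
  simp only [AlgHom.toRingHom_eq_coe, RingHom.coe_coe, map_mul, map_pow, map_sub, map_one,
    e3, e4, e5] at h2
  rw [zero_dvd_iff] at h2
  revert h2
  decide

end QSpin
end
end
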